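/- Let (P₀, Q₀) and (P, Q) be pairs of orthogonal projections on H, both in generic position, with P₀ - Q₀ = P - Q = A. Let V₀ be the Davis symmetry of (P₀, Q₀), i.e., the symmetry commuting with P₀ + Q₀ - 1 such that V₀(P₀ + Q₀ - 1) is positive. Suppose P₀ + Q - 1 is invertible, and let Σ = (P₀ + Q - 1) · ((P₀ + Q - 1)²)^{-1/2}. Then U := Σ V₀ is a unitary operator satisfying UA = AU, U P₀ U* = P, and U Q₀ U* = Q. -/

import Mathlib

open ContinuousLinearMap

set_option maxHeartbeats 2000000
set_option synthInstance.maxHeartbeats 1000000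

section Aux

variable {𝔸 : Type*} [CStarAlgebra 𝔸]

lemma aux_isClosed_centralizer (x : 𝔸) :
    IsClosed ((StarSubalgebra.centralizer ℂ {x} : StarSubalgebra ℂ 𝔸) : Set 𝔸) := by
  rw [StarSubalgebra.coe_centralizer]
  have : (({x} ∪ star {x} : Set 𝔸)).centralizer =
      ⋂ g ∈ ({x} ∪ star {x} : Set 𝔸), {z | g * z = z * g} := by
    ext z
    simp [Set.mem_centralizer_iff]
  rw [this]
  exact isClosed_biInter fun g _ => isClosed_eq (by fun_prop) (by fun_prop)

lemma aux_commute_of_mem_elemental {x a : 𝔸} (hx : Commute x a) (hx' : Commute x (star a))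
    {y : 𝔸} (hy : y ∈ StarAlgebra.elemental ℂ a) : Commute x y := by
  have hmem : a ∈ StarSubalgebra.centralizer ℂ ({x} : Set 𝔸) := by
    rw [StarSubalgebra.mem_centralizer_iff]
    rintro g rfl
    exact ⟨hx.eq, by simpa [star_mul] using (congrArg star hx'.eq).symm⟩
  have hle : StarAlgebra.elemental ℂ a ≤ StarSubalgebra.centralizer ℂ ({x} : Set 𝔸) :=
    StarSubalgebra.topologicalClosure_minimal
      (StarAlgebra.adjoin_le <| Set.singleton_subset_iff.2 hmem) (aux_isClosed_centralizer x)
  exact ((StarSubalgebra.mem_centralizer_iff ℂ).mp (hle hy) x rfl).1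

lemma aux_cfc_mem_elemental (f : ℂ → ℂ) (a : 𝔸) [ha : IsStarNormal a] :
    cfc f a ∈ StarAlgebra.elemental ℂ a := by
  refine cfc_cases (· ∈ StarAlgebra.elemental ℂ a) a f (zero_mem _) fun hf hna => ?_
  rw [cfcHom_eq_of_isStarNormal]
  exact SetLike.coe_mem _

lemma aux_commute_cfc_sqrt {x a : 𝔸} [PartialOrder 𝔸] [StarOrderedRing 𝔸]
    (ha : 0 ≤ a) (hx : Commute x a) (hx' : Commute x (star a)) :
    Commute x (CFC.sqrt a) := by
  have hsa : IsSelfAdjoint a := IsSelfAdjoint.of_nonneg ha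
  have : CFC.sqrt a = cfc (fun z : ℂ =>
      (((NNReal.sqrt (z.re).toNNReal : ℝ) : ℂ))) a := by
    rw [CFC.sqrt_eq_cfc, cfc_nnreal_eq_real _ a ha, cfc_real_eq_complex _ hsa]
  rw [this]
  exact aux_commute_of_mem_elemental hx hx'
    (haveI := hsa.isStarNormal; aux_cfc_mem_elemental _ a)

end Aux

lemma aux_anticomm_sq {R₀ : Type*} [Ring R₀] {x y : R₀} (h : x * y = -(y * x)) :
    x * (y * y) = (y * y) * x := by
  calc x * (y * y) = (x * y) * y := by rw [mul_assoc]
    _ = (-(y * x)) * y := by rw [h]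
    _ = -(y * (x * y)) := by noncomm_ring
    _ = -(y * (-(y * x))) := by rw [h]
    _ = (y * y) * x := by noncomm_ring

lemma aux_commute_inverse {R₀ : Type*} [Ring R₀] {x r : R₀} (hr : IsUnit r)
    (h : x * r = r * x) : x * Ring.inverse r = Ring.inverse r * x := by
  have h1 := Ring.mul_inverse_cancel r hr
  have h2 := Ring.inverse_mul_cancel r hr
  calc x * Ring.inverse r = (Ring.inverse r * r) * (x * Ring.inverse r) := by rw [h2, one_mul]
    _ = Ring.inverse r * ((r * x) * Ring.inverse r) := by noncomm_ring
    _ = Ring.inverse r * ((x * r) * Ring.inverse r) := by rw [h]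
    _ = Ring.inverse r * (x * (r * Ring.inverse r)) := by noncomm_ring
    _ = Ring.inverse r * x := by rw [h1, mul_one]

lemma aux_two_cancel {M : Type*} [AddCommGroup M] [Module ℂ M] {x y : M}
    (h : x + x = y + y) : x = y := by
  have h2 : (2 : ℂ) • x = (2 : ℂ) • y := by rw [two_smul, two_smul]; exact h
  exact smul_right_injective M two_ne_zero h2

lemma aux_four_cancel {M : Type*} [AddCommGroup M] [Module ℂ M] {x y : M}
    (h : x + x + x + x = y + y + y + y) : x = y := by
  have e : ∀ z : M, (4 : ℂ) • z = z + z + z + z := fun z => by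
    rw [show (4 : ℂ) = 1 + 1 + 1 + 1 by norm_num]
    simp [add_smul, add_assoc]
  have h2 : (4 : ℂ) • x = (4 : ℂ) • y := by rw [e, e]; exact h
  exact smul_right_injective M (by norm_num) h2



variable {H : Type*} [NormedAddCommGroup H] [InnerProductSpace ℂ H] [CompleteSpace H]

/-- An orthogonal projection: a selfadjoint idempotent bounded operator. -/
def IsOrthogonalProjection (P : H →L[ℂ] H) : Prop :=
  IsSelfAdjoint P ∧ P * P = P

/-- A symmetry: a selfadjoint unitary operator. -/
def IsSymmetry (V : H →L[ℂ] H) : Prop :=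
  IsSelfAdjoint V ∧ V * V = 1

/-- Two orthogonal projections are in generic position if the four canonical
intersections of their ranges and kernels are trivial. -/
def GenericPosition (P Q : H →L[ℂ] H) : Prop :=
  LinearMap.range (P : H →ₗ[ℂ] H) ⊓ LinearMap.range (Q : H →ₗ[ℂ] H) = ⊥ ∧
  LinearMap.range (P : H →ₗ[ℂ] H) ⊓ LinearMap.ker (Q : H →ₗ[ℂ] H) = ⊥ ∧
  LinearMap.ker (P : H →ₗ[ℂ] H) ⊓ LinearMap.range (Q : H →ₗ[ℂ] H) = ⊥ ∧
  LinearMap.ker (P : H →ₗ[ℂ] H) ⊓ LinearMap.ker (Q : H →ₗ[ℂ] H) = ⊥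


/-- Local cross-section formula. Let `(P₀,Q₀)` and `(P,Q)` be generic pairs with
the same difference `A`, `V₀` the Davis symmetry of `(P₀,Q₀)`. If `P₀ + Q - 1` is invertible
and `R` is the (positive, invertible) square root of `(P₀ + Q - 1)²`, then
`U = (P₀ + Q - 1) R⁻¹ V₀` is a unitary commuting with `A` that carries `(P₀,Q₀)` to `(P,Q)`. -/
theorem cross_section_unitary (P₀ Q₀ P Q V₀ R : H →L[ℂ] H)
    (hP₀ : IsOrthogonalProjection P₀) (hQ₀ : IsOrthogonalProjection Q₀)
    (hP : IsOrthogonalProjection P) (hQ : IsOrthogonalProjection Q)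
    (hgen₀ : GenericPosition P₀ Q₀) (hgen : GenericPosition P Q)
    (hdiff : P₀ - Q₀ = P - Q)
    (hV₀ : IsSymmetry V₀) (hV₀c : Commute V₀ (P₀ + Q₀ - 1))
    (hV₀p : (V₀ * (P₀ + Q₀ - 1)).IsPositive)
    (hinv : IsUnit (P₀ + Q - 1))
    (hR : R.IsPositive) (hR2 : R * R = (P₀ + Q - 1) * (P₀ + Q - 1)) :
    (P₀ + Q - 1) * Ring.inverse R * V₀ ∈ unitary (H →L[ℂ] H) ∧
    ((P₀ + Q - 1) * Ring.inverse R * V₀) * (P₀ - Q₀) =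
      (P₀ - Q₀) * ((P₀ + Q - 1) * Ring.inverse R * V₀) ∧
    ((P₀ + Q - 1) * Ring.inverse R * V₀) * P₀ * star ((P₀ + Q - 1) * Ring.inverse R * V₀) = P ∧
    ((P₀ + Q - 1) * Ring.inverse R * V₀) * Q₀ * star ((P₀ + Q - 1) * Ring.inverse R * V₀) = Q := by
  obtain ⟨sP₀, iP₀⟩ := hP₀
  obtain ⟨sQ₀, iQ₀⟩ := hQ₀
  obtain ⟨sP, iP⟩ := hP
  obtain ⟨sQ, iQ⟩ := hQ
  obtain ⟨sV₀, V₀sq⟩ := hV₀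
  set A := P₀ - Q₀ with hAdef
  set B₀ := P₀ + Q₀ - 1 with hB₀def
  set B₁ := P + Q - 1 with hB₁def
  set N := P₀ + Q - 1 with hNdef
  have s1 : IsSelfAdjoint (1 : H →L[ℂ] H) := IsSelfAdjoint.one _
  have sA : IsSelfAdjoint A := sP₀.sub sQ₀
  have sB₀ : IsSelfAdjoint B₀ := (sP₀.add sQ₀).sub s1
  have sB₁ : IsSelfAdjoint B₁ := (sP.add sQ).sub s1
  have sN : IsSelfAdjoint N := (sP₀.add sQ).sub s1
  have a₀ : A * B₀ = -(B₀ * A) := by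
    rw [hAdef, hB₀def]
    simp only [mul_sub, sub_mul, mul_add, add_mul, mul_one, one_mul, iP₀, iQ₀]
    abel
  have a₁ : A * B₁ = -(B₁ * A) := by
    rw [hdiff, hB₁def]
    simp only [mul_sub, sub_mul, mul_add, add_mul, mul_one, one_mul, iP, iQ]
    abel
  have s₀ : B₀ * B₀ = 1 - A * A := by
    rw [hAdef, hB₀def]
    simp only [mul_sub, sub_mul, mul_add, add_mul, mul_one, one_mul, iP₀, iQ₀]
    abel
  have s₁ : B₁ * B₁ = 1 - A * A := by
    rw [hdiff, hB₁def]
    simp only [mul_sub, sub_mul, mul_add, add_mul, mul_one, one_mul, iP, iQ]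
    abel
  have hMN : N + N = B₀ + B₁ := by
    rw [hNdef, hB₀def, hB₁def]
    rw [hAdef] at hdiff
    rw [← sub_eq_zero]
    rw [show (P₀ + Q - 1) + (P₀ + Q - 1) - ((P₀ + Q₀ - 1) + (P + Q - 1))
        = P₀ - Q₀ - (P - Q) from by abel, hdiff, sub_self]
  -- derived (anti)commutation facts
  have aN : A * N = -(N * A) := by
    have h : A * (N + N) = -((N + N) * A) := by
      rw [hMN, mul_add, add_mul, a₀, a₁]; abel
    apply aux_two_cancel
    rw [mul_add, add_mul] at h
    rw [show -(N * A) + -(N * A) = -(N * A + N * A) from by abel]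
    exact h
  have b₀a : B₀ * A = -(A * B₀) := by rw [a₀, neg_neg]
  have b₁a : B₁ * A = -(A * B₁) := by rw [a₁, neg_neg]
  have cA₀ : B₀ * (A * A) = (A * A) * B₀ := aux_anticomm_sq b₀a
  have cA₁ : B₁ * (A * A) = (A * A) * B₁ := aux_anticomm_sq b₁a
  have cANN : A * (N * N) = (N * N) * A := aux_anticomm_sq aN
  have expandM : (N + N) * (N + N) = N * N + N * N + N * N + N * N := by noncomm_ring
  have cB₀NN : B₀ * (N * N) = (N * N) * B₀ := by
    have hM : B₀ * ((B₀ + B₁) * (B₀ + B₁)) = ((B₀ + B₁) * (B₀ + B₁)) * B₀ := by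
      have l : B₀ * ((B₀ + B₁) * (B₀ + B₁))
          = (B₀ * B₀) * B₀ + (B₀ * B₀) * B₁ + B₀ * (B₁ * B₀) + B₀ * (B₁ * B₁) := by
        noncomm_ring
      have r : ((B₀ + B₁) * (B₀ + B₁)) * B₀
          = (B₀ * B₀) * B₀ + B₀ * (B₁ * B₀) + B₁ * (B₀ * B₀) + (B₁ * B₁) * B₀ := by
        noncomm_ring
      rw [l, r, s₀, s₁]
      simp only [mul_sub, sub_mul, one_mul, mul_one, cA₀, cA₁]
      abel
    rw [← hMN, expandM] at hM
    apply aux_four_cancel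
    calc B₀ * (N * N) + B₀ * (N * N) + B₀ * (N * N) + B₀ * (N * N)
        = B₀ * (N * N + N * N + N * N + N * N) := by rw [mul_add, mul_add, mul_add]
      _ = (N * N + N * N + N * N + N * N) * B₀ := hM
      _ = (N * N) * B₀ + (N * N) * B₀ + (N * N) * B₀ + (N * N) * B₀ := by
          rw [add_mul, add_mul, add_mul]
  have hNBN : N * B₀ * N = B₁ * (N * N) := by
    have hM : (B₀ + B₁) * B₀ * (B₀ + B₁) = B₁ * ((B₀ + B₁) * (B₀ + B₁)) := by
      have l : (B₀ + B₁) * B₀ * (B₀ + B₁)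
          = (B₀ * B₀) * B₀ + (B₀ * B₀) * B₁ + B₁ * (B₀ * B₀) + B₁ * (B₀ * B₁) := by
        noncomm_ring
      have r : B₁ * ((B₀ + B₁) * (B₀ + B₁))
          = B₁ * (B₀ * B₀) + B₁ * (B₀ * B₁) + (B₁ * B₁) * B₀ + (B₁ * B₁) * B₁ := by
        noncomm_ring
      rw [l, r, s₀, s₁]
      abel
    rw [← hMN] at hM
    apply aux_four_cancel
    calc N * B₀ * N + N * B₀ * N + N * B₀ * N + N * B₀ * N
        = (N + N) * B₀ * (N + N) := by noncomm_ring
      _ = B₁ * ((N + N) * (N + N)) := hM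
      _ = B₁ * (N * N) + B₁ * (N * N) + B₁ * (N * N) + B₁ * (N * N) := by noncomm_ring
  -- injectivity of B₀
  have hkerB₀ : ∀ x : H, B₀ x = 0 → x = 0 := by
    intro x hx
    rw [hB₀def] at hx
    simp only [ContinuousLinearMap.sub_apply, ContinuousLinearMap.add_apply,
      ContinuousLinearMap.one_apply] at hx
    have hx' : P₀ x + Q₀ x = x := sub_eq_zero.mp hx
    have hPP : P₀ (P₀ x) = P₀ x := by
      have := congrArg (fun T : H →L[ℂ] H => T x) iP₀
      simpa [ContinuousLinearMap.mul_apply] using this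
    have hQQ : Q₀ (Q₀ x) = Q₀ x := by
      have := congrArg (fun T : H →L[ℂ] H => T x) iQ₀
      simpa [ContinuousLinearMap.mul_apply] using this
    have h1 : P₀ (Q₀ x) = 0 := by
      have h := congrArg P₀ hx'
      rw [map_add, hPP, add_eq_left] at h
      exact h
    have h2 : Q₀ (P₀ x) = 0 := by
      have h := congrArg Q₀ hx'
      rw [map_add, hQQ, add_eq_right] at h
      exact h
    have hu : P₀ x = 0 := by
      have hmem : P₀ x ∈ LinearMap.range (P₀ : H →ₗ[ℂ] H) ⊓ LinearMap.ker (Q₀ : H →ₗ[ℂ] H) :=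
        Submodule.mem_inf.mpr ⟨LinearMap.mem_range.mpr ⟨x, rfl⟩, LinearMap.mem_ker.mpr h2⟩
      rw [hgen₀.2.1] at hmem
      exact (Submodule.mem_bot _).mp hmem
    have hv : Q₀ x = 0 := by
      have hmem : Q₀ x ∈ LinearMap.ker (P₀ : H →ₗ[ℂ] H) ⊓ LinearMap.range (Q₀ : H →ₗ[ℂ] H) :=
        Submodule.mem_inf.mpr ⟨LinearMap.mem_ker.mpr h1, LinearMap.mem_range.mpr ⟨x, rfl⟩⟩
      rw [hgen₀.2.2.1] at hmem
      exact (Submodule.mem_bot _).mp hmem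
    rw [← hx', hu, hv, add_zero]
  -- positivity and square root facts
  have posVB : (0 : H →L[ℂ] H) ≤ V₀ * B₀ := (nonneg_iff_isPositive _).mpr hV₀p
  have posR : (0 : H →L[ℂ] H) ≤ R := (nonneg_iff_isPositive _).mpr hR
  have sR : IsSelfAdjoint R := hR.isSelfAdjoint
  have cV : V₀ * B₀ = B₀ * V₀ := hV₀c
  have sqVB : (V₀ * B₀) * (V₀ * B₀) = B₀ * B₀ := by
    calc (V₀ * B₀) * (V₀ * B₀) = V₀ * ((B₀ * V₀) * B₀) := by noncomm_ring
      _ = V₀ * ((V₀ * B₀) * B₀) := by rw [cV]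
      _ = (V₀ * V₀) * (B₀ * B₀) := by noncomm_ring
      _ = B₀ * B₀ := by rw [V₀sq, one_mul]
  have sqrtVB : CFC.sqrt (B₀ * B₀) = V₀ * B₀ := CFC.sqrt_unique sqVB posVB
  have sqrtR : CFC.sqrt (N * N) = R := CFC.sqrt_unique hR2 posR
  have posBB : (0 : H →L[ℂ] H) ≤ B₀ * B₀ := by
    simpa [sB₀.star_eq] using star_mul_self_nonneg B₀
  have posNN : (0 : H →L[ℂ] H) ≤ N * N := by
    simpa [sN.star_eq] using star_mul_self_nonneg N
  have stBB : star (B₀ * B₀) = B₀ * B₀ := by rw [star_mul, sB₀.star_eq]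
  have stNN : star (N * N) = N * N := by rw [star_mul, sN.star_eq]
  have cABB : A * (B₀ * B₀) = (B₀ * B₀) * A := by
    rw [s₀]; simp only [mul_sub, sub_mul, mul_one, one_mul, mul_assoc]
  have cAVB : A * (V₀ * B₀) = (V₀ * B₀) * A := by
    rw [← sqrtVB]
    exact aux_commute_cfc_sqrt posBB cABB (by rw [stBB]; exact cABB)
  have cAR : A * R = R * A := by
    rw [← sqrtR]
    exact aux_commute_cfc_sqrt posNN cANN (by rw [stNN]; exact cANN)
  have cB₀R : B₀ * R = R * B₀ := by
    rw [← sqrtR]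
    exact aux_commute_cfc_sqrt posNN cB₀NN (by rw [stNN]; exact cB₀NN)
  have cNR : N * R = R * N := by
    rw [← sqrtR]
    exact aux_commute_cfc_sqrt posNN (Commute.mul_right rfl rfl)
      (by rw [stNN]; exact Commute.mul_right rfl rfl)
  -- the Davis symmetry anticommutes with A
  have hAV : A * V₀ = -(V₀ * A) := by
    have hSB : (A * V₀ + V₀ * A) * B₀ = 0 := by
      have h2 : (A * V₀ + V₀ * A) * B₀ = A * (V₀ * B₀) - (V₀ * B₀) * A := by
        rw [add_mul, mul_assoc V₀ A B₀, a₀]; noncomm_ring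
      rw [h2, cAVB, sub_self]
    have hBS : B₀ * (A * V₀ + V₀ * A) = 0 := by
      have h := congrArg star hSB
      rw [star_mul, star_zero, star_add, star_mul, star_mul, sA.star_eq, sV₀.star_eq,
        sB₀.star_eq] at h
      rw [show A * V₀ + V₀ * A = V₀ * A + A * V₀ from by abel]
      exact h
    have hS0 : A * V₀ + V₀ * A = 0 := by
      ext x
      have hx := congrArg (fun T : H →L[ℂ] H => T x) hBS
      simp only [ContinuousLinearMap.mul_apply, ContinuousLinearMap.zero_apply] at hx
      simpa using hkerB₀ _ hx
    exact eq_neg_of_add_eq_zero_left hS0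
  have hVA : V₀ * A = -(A * V₀) := by rw [hAV, neg_neg]
  -- R is invertible
  have hNu : IsUnit N := hinv
  have hRu : IsUnit R := by
    set iN := Ring.inverse N with hiN
    have hNi : N * iN = 1 := Ring.mul_inverse_cancel N hNu
    have hiNN : iN * N = 1 := Ring.inverse_mul_cancel N hNu
    have h1 : R * (R * iN * iN) = 1 := by
      calc R * (R * iN * iN) = (R * R) * iN * iN := by noncomm_ring
        _ = (N * N) * iN * iN := by rw [hR2]
        _ = N * (N * iN) * iN := by noncomm_ring
        _ = 1 := by rw [hNi, mul_one, hNi]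
    have h2 : (iN * iN * R) * R = 1 := by
      calc (iN * iN * R) * R = iN * (iN * (R * R)) := by noncomm_ring
        _ = iN * (iN * (N * N)) := by rw [hR2]
        _ = iN * ((iN * N) * N) := by noncomm_ring
        _ = 1 := by rw [hiNN, one_mul, hiNN]
    have hbc : iN * iN * R = R * iN * iN := by
      calc iN * iN * R = (iN * iN * R) * (R * (R * iN * iN)) := by rw [h1, mul_one]
        _ = ((iN * iN * R) * R) * (R * iN * iN) := by noncomm_ring
        _ = R * iN * iN := by rw [h2, one_mul]
    exact ⟨⟨R, R * iN * iN, h1, by rw [← hbc]; exact h2⟩, rfl⟩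
  set iR := Ring.inverse R with hiRdef
  have riR : R * iR = 1 := Ring.mul_inverse_cancel R hRu
  have irR : iR * R = 1 := Ring.inverse_mul_cancel R hRu
  have siR : IsSelfAdjoint iR := by
    have h1 : R * star iR = 1 := by
      have h := congrArg star irR
      rw [star_mul, star_one, sR.star_eq] at h
      exact h
    show star iR = iR
    calc star iR = (iR * R) * star iR := by rw [irR, one_mul]
      _ = iR * (R * star iR) := by rw [mul_assoc]
      _ = iR := by rw [h1, mul_one]
  have ciRN : N * iR = iR * N := aux_commute_inverse hRu cNR
  have ciRA : A * iR = iR * A := aux_commute_inverse hRu cAR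
  have ciRB₀ : B₀ * iR = iR * B₀ := aux_commute_inverse hRu cB₀R
  -- the unitary U and its adjoint
  have sSig : star (N * iR) = N * iR := by
    rw [star_mul, siR.star_eq, sN.star_eq, ← ciRN]
  have SigSig : (N * iR) * (N * iR) = 1 := by
    calc (N * iR) * (N * iR) = N * ((iR * N) * iR) := by noncomm_ring
      _ = N * ((N * iR) * iR) := by rw [← ciRN]
      _ = (N * N) * (iR * iR) := by noncomm_ring
      _ = (R * R) * (iR * iR) := by rw [hR2]
      _ = R * ((R * iR) * iR) := by noncomm_ring
      _ = 1 := by rw [riR, one_mul, riR]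
  have sU : star (N * iR * V₀) = V₀ * (N * iR) := by
    rw [star_mul, sV₀.star_eq, sSig]
  have hUstarU : star (N * iR * V₀) * (N * iR * V₀) = 1 := by
    rw [sU]
    calc V₀ * (N * iR) * (N * iR * V₀) = V₀ * ((N * iR) * (N * iR)) * V₀ := by noncomm_ring
      _ = V₀ * V₀ := by rw [SigSig, mul_one]
      _ = 1 := V₀sq
  have hUUstar : (N * iR * V₀) * star (N * iR * V₀) = 1 := by
    rw [sU]
    calc (N * iR * V₀) * (V₀ * (N * iR)) = (N * iR) * (V₀ * V₀) * (N * iR) := by noncomm_ring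
      _ = (N * iR) * (N * iR) := by rw [V₀sq, mul_one]
      _ = 1 := SigSig
  have cASig : A * (N * iR) = -((N * iR) * A) := by
    calc A * (N * iR) = (A * N) * iR := by rw [mul_assoc]
      _ = (-(N * A)) * iR := by rw [aN]
      _ = -(N * (A * iR)) := by noncomm_ring
      _ = -(N * (iR * A)) := by rw [ciRA]
      _ = -((N * iR) * A) := by noncomm_ring
  have hUA : (N * iR * V₀) * A = A * (N * iR * V₀) := by
    calc (N * iR * V₀) * A = (N * iR) * (V₀ * A) := by noncomm_ring
      _ = (N * iR) * (-(A * V₀)) := by rw [hVA]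
      _ = (-((N * iR) * A)) * V₀ := by noncomm_ring
      _ = (A * (N * iR)) * V₀ := by rw [cASig]
      _ = A * (N * iR * V₀) := by noncomm_ring
  have keyA : (N * iR * V₀) * A * star (N * iR * V₀) = A := by
    rw [hUA, mul_assoc, hUUstar, mul_one]
  have key2 : (N * iR * V₀) * B₀ * star (N * iR * V₀) = B₁ := by
    rw [sU]
    calc (N * iR * V₀) * B₀ * (V₀ * (N * iR))
        = (N * iR) * ((V₀ * B₀) * V₀) * (N * iR) := by noncomm_ring
      _ = (N * iR) * ((B₀ * V₀) * V₀) * (N * iR) := by rw [cV]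
      _ = (N * iR) * (B₀ * (V₀ * V₀)) * (N * iR) := by rw [mul_assoc B₀]
      _ = (N * iR) * B₀ * (N * iR) := by rw [V₀sq, mul_one]
      _ = (N * (iR * B₀)) * (N * iR) := by noncomm_ring
      _ = (N * (B₀ * iR)) * (N * iR) := by rw [ciRB₀]
      _ = (N * B₀) * ((iR * N) * iR) := by noncomm_ring
      _ = (N * B₀) * ((N * iR) * iR) := by rw [ciRN]
      _ = (N * B₀ * N) * (iR * iR) := by noncomm_ring
      _ = (B₁ * (N * N)) * (iR * iR) := by rw [hNBN]
      _ = (B₁ * (R * R)) * (iR * iR) := by rw [hR2]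
      _ = B₁ * (R * ((R * iR) * iR)) := by noncomm_ring
      _ = B₁ := by rw [riR, one_mul, riR, mul_one]
  refine ⟨Unitary.mem_iff.mpr ⟨hUstarU, hUUstar⟩, hUA, ?_, ?_⟩
  · have hP₀dec : P₀ + P₀ = 1 + A + B₀ := by rw [hAdef, hB₀def]; abel
    have hPdec : P + P = 1 + A + B₁ := by rw [hAdef, hAdef.symm.trans hdiff, hB₁def]; abel
    apply aux_two_cancel
    calc (N * iR * V₀) * P₀ * star (N * iR * V₀) + (N * iR * V₀) * P₀ * star (N * iR * V₀)
        = (N * iR * V₀) * (P₀ + P₀) * star (N * iR * V₀) := by noncomm_ring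
      _ = (N * iR * V₀) * (1 + A + B₀) * star (N * iR * V₀) := by rw [hP₀dec]
      _ = (N * iR * V₀) * star (N * iR * V₀) + (N * iR * V₀) * A * star (N * iR * V₀)
          + (N * iR * V₀) * B₀ * star (N * iR * V₀) := by noncomm_ring
      _ = 1 + A + B₁ := by rw [hUUstar, keyA, key2]
      _ = P + P := hPdec.symm
  · have hQ₀dec : Q₀ + Q₀ = 1 - A + B₀ := by rw [hAdef, hB₀def]; abel
    have hQdec : Q + Q = 1 - A + B₁ := by rw [hAdef, hAdef.symm.trans hdiff, hB₁def]; abel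
    apply aux_two_cancel
    calc (N * iR * V₀) * Q₀ * star (N * iR * V₀) + (N * iR * V₀) * Q₀ * star (N * iR * V₀)
        = (N * iR * V₀) * (Q₀ + Q₀) * star (N * iR * V₀) := by noncomm_ring
      _ = (N * iR * V₀) * (1 - A + B₀) * star (N * iR * V₀) := by rw [hQ₀dec]
      _ = (N * iR * V₀) * star (N * iR * V₀) - (N * iR * V₀) * A * star (N * iR * V₀)
          + (N * iR * V₀) * B₀ * star (N * iR * V₀) := by noncomm_ring
      _ = 1 - A + B₁ := by rw [hUUstar, keyA, key2]
      _ = Q + Q := hQdec.symm
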